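/- Let g : ℂ → ℂ be a monic polynomial of degree d ≥ 2. Then the dynamical Green function G(w) = lim_{n→∞} d^{-n} log⁺|gⁿ(w)| exists for every w ∈ ℂ, the limit is uniform on compact sets, and G satisfies G(g(w)) = d·G(w). -/

import Mathlib

open Filter Polynomial Topology

/-- Key estimate: `|log⁺|g(z)| - d·log⁺|z||` is uniformly bounded. -/
lemma green_key (g : Polynomial ℂ) (hm : g.Monic)
    (d : ℕ) (hd : d = g.natDegree) (hd2 : 2 ≤ d) :
    ∃ C : ℝ, 0 ≤ C ∧ ∀ z : ℂ,
      |Real.log (max (‖g.eval z‖) 1)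
        - d * Real.log (max (‖z‖) 1)| ≤ C := by
  set r := g.eraseLead with hrdef
  have hgr : ∀ z : ℂ, g.eval z = r.eval z + z ^ d := by
    intro z
    conv_lhs => rw [← g.eraseLead_add_C_mul_X_pow]
    simp [hm.leadingCoeff, ← hd, hrdef]
  have hrd : r.natDegree < d := lt_of_le_of_lt g.eraseLead_natDegree_le (by omega)
  obtain ⟨M, hM0, hrb⟩ : ∃ M : ℝ, 0 ≤ M ∧
      ∀ z : ℂ, ‖r.eval z‖ ≤ M * max (‖z‖) 1 ^ (d - 1) := by
    refine ⟨∑ i ∈ Finset.range d, ‖r.coeff i‖,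
      Finset.sum_nonneg fun i _ => norm_nonneg _, fun z => ?_⟩
    rw [Polynomial.eval_eq_sum_range' hrd]
    refine le_trans (norm_sum_le _ _) ?_
    rw [Finset.sum_mul]
    refine Finset.sum_le_sum fun i hi => ?_
    rw [norm_mul, norm_pow]
    refine mul_le_mul_of_nonneg_left ?_ (norm_nonneg _)
    calc ‖z‖ ^ i ≤ max (‖z‖) 1 ^ i :=
          pow_le_pow_left₀ (norm_nonneg _) (le_max_left _ _) i
      _ ≤ max (‖z‖) 1 ^ (d - 1) :=
          pow_le_pow_right₀ (le_max_right _ _) (by have := Finset.mem_range.1 hi; omega)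
  set R : ℝ := 2 * M + 2 with hRdef
  have hR2 : (2:ℝ) ≤ R := by linarith
  have hR1 : (1:ℝ) ≤ R := by linarith
  have hlogR : 0 ≤ Real.log R := Real.log_nonneg hR1
  have hlog2 : 0 ≤ Real.log 2 := Real.log_nonneg one_le_two
  refine ⟨Real.log 2 + d * Real.log R, by positivity, ?_⟩
  intro z
  set x := ‖z‖ with hx
  have hx0 : 0 ≤ x := norm_nonneg z
  rcases le_total R x with hzR | hzR
  · -- outer region
    have hz2 : (2:ℝ) ≤ x := hR2.trans hzR
    have hz1 : (1:ℝ) ≤ x := by linarith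
    have hmax : max x 1 = x := max_eq_left hz1
    have hM2 : M ≤ x / 2 := by linarith
    have hpow : x ^ d = x ^ (d - 1) * x := by
      rw [← pow_succ]; congr 1; omega
    have hpow0 : (0:ℝ) ≤ x ^ (d - 1) := pow_nonneg hx0 _
    have hple : M * x ^ (d - 1) ≤ x ^ d / 2 := by
      rw [hpow]
      calc M * x ^ (d - 1) ≤ (x / 2) * x ^ (d - 1) :=
            mul_le_mul_of_nonneg_right hM2 hpow0
        _ = x ^ (d - 1) * x / 2 := by ring
    have hrbz : ‖r.eval z‖ ≤ x ^ d / 2 := by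
      have := hrb z; rw [hmax] at this; exact this.trans hple
    have hub : ‖g.eval z‖ ≤ 2 * x ^ d := by
      rw [hgr z]
      have h1 : ‖r.eval z + z ^ d‖
          ≤ ‖r.eval z‖ + ‖z ^ d‖ := norm_add_le _ _
      rw [norm_pow] at h1
      have : ‖z‖ ^ d = x ^ d := by rw [hx]
      linarith [h1, hrbz, pow_nonneg hx0 d]
    have hlb : x ^ d / 2 ≤ ‖g.eval z‖ := by
      have h1 : ‖z ^ d‖
          ≤ ‖g.eval z‖ + ‖r.eval z‖ := by
        have he : (z : ℂ) ^ d = g.eval z + -(r.eval z) := by rw [hgr]; ring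
        rw [he]
        refine (norm_add_le _ _).trans ?_
        rw [norm_neg]
      rw [norm_pow] at h1
      linarith [h1, hrbz]
    have hxd4 : (4:ℝ) ≤ x ^ d := by
      calc (4:ℝ) = 2 ^ 2 := by norm_num
        _ ≤ 2 ^ d := pow_le_pow_right₀ one_le_two hd2
        _ ≤ x ^ d := pow_le_pow_left₀ (by norm_num) hz2 d
    have hgz1 : (1:ℝ) ≤ ‖g.eval z‖ := by linarith
    have hgz0 : (0:ℝ) < ‖g.eval z‖ := by linarith
    have hmaxg : max (‖g.eval z‖) 1 = ‖g.eval z‖ :=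
      max_eq_left hgz1
    rw [hmaxg, hmax]
    have hxd0 : (0:ℝ) < x ^ d := by linarith
    have h1 : Real.log (‖g.eval z‖) ≤ Real.log 2 + d * Real.log x := by
      have := Real.log_le_log hgz0 hub
      rwa [Real.log_mul two_ne_zero (ne_of_gt hxd0), Real.log_pow] at this
    have h2 : (d : ℝ) * Real.log x ≤ Real.log 2 + Real.log (‖g.eval z‖) := by
      have hle : x ^ d ≤ 2 * ‖g.eval z‖ := by linarith
      have := Real.log_le_log hxd0 hle
      rwa [Real.log_mul two_ne_zero (ne_of_gt hgz0), Real.log_pow] at this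
    rw [abs_le]
    constructor
    · have : 0 ≤ (d : ℝ) * Real.log R := by positivity
      linarith
    · have : 0 ≤ (d : ℝ) * Real.log R := by positivity
      linarith
  · -- bounded region
    have hmaxz : max x 1 ≤ R := max_le hzR hR1
    have hmaxz0 : (0:ℝ) < max x 1 := lt_of_lt_of_le zero_lt_one (le_max_right _ _)
    have hLz : Real.log (max x 1) ≤ Real.log R := Real.log_le_log hmaxz0 hmaxz
    have hLz0 : 0 ≤ Real.log (max x 1) := Real.log_nonneg (le_max_right _ _)
    have hRd1 : (1:ℝ) ≤ R ^ d := by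
      calc (1:ℝ) = 1 ^ d := (one_pow d).symm
        _ ≤ R ^ d := pow_le_pow_left₀ zero_le_one hR1 d
    have hRd0 : (0:ℝ) < R ^ d := by linarith
    have hMR : M ≤ R / 2 := by linarith
    have hRpow : R ^ d = R ^ (d - 1) * R := by rw [← pow_succ]; congr 1; omega
    have hRp0 : (0:ℝ) ≤ R ^ (d - 1) := pow_nonneg (by linarith) _
    have habs : ‖g.eval z‖ ≤ 2 * R ^ d := by
      rw [hgr z]
      have h1 : ‖r.eval z + z ^ d‖
          ≤ ‖r.eval z‖ + ‖z ^ d‖ := norm_add_le _ _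
      rw [norm_pow] at h1
      have h2 : ‖r.eval z‖ ≤ M * R ^ (d - 1) := by
        refine (hrb z).trans (mul_le_mul_of_nonneg_left ?_ hM0)
        exact pow_le_pow_left₀ (le_of_lt hmaxz0) hmaxz _
      have h3 : M * R ^ (d - 1) ≤ R ^ d / 2 := by
        rw [hRpow]
        calc M * R ^ (d - 1) ≤ (R / 2) * R ^ (d - 1) :=
              mul_le_mul_of_nonneg_right hMR hRp0
          _ = R ^ (d - 1) * R / 2 := by ring
      have h4 : x ^ d ≤ R ^ d := pow_le_pow_left₀ hx0 hzR d
      linarith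
    have hmg : max (‖g.eval z‖) 1 ≤ 2 * R ^ d :=
      max_le habs (by linarith)
    have hmg0 : (0:ℝ) < max (‖g.eval z‖) 1 :=
      lt_of_lt_of_le zero_lt_one (le_max_right _ _)
    have hLgz : Real.log (max (‖g.eval z‖) 1)
        ≤ Real.log 2 + d * Real.log R := by
      have := Real.log_le_log hmg0 hmg
      rwa [Real.log_mul two_ne_zero (ne_of_gt hRd0), Real.log_pow] at this
    have hLgz0 : 0 ≤ Real.log (max (‖g.eval z‖) 1) :=
      Real.log_nonneg (le_max_right _ _)
    rw [abs_le]
    have hdLz : (d:ℝ) * Real.log (max x 1) ≤ d * Real.log R := by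
      have : (0:ℝ) ≤ d := Nat.cast_nonneg d
      exact mul_le_mul_of_nonneg_left hLz this
    have hdLz0 : 0 ≤ (d:ℝ) * Real.log (max x 1) := by positivity
    constructor <;> linarith

/-- For a monic polynomial `g` of degree `d ≥ 2`, the dynamical Green function
`G(w) = lim d⁻ⁿ log⁺|gⁿ(w)|` exists, the convergence is uniform on compact subsets of ℂ
(i.e. locally uniform), and `G(g(w)) = d·G(w)`. -/
theorem green_function_exists (g : Polynomial ℂ) (hm : g.Monic)
    (d : ℕ) (hd : d = g.natDegree) (hd2 : 2 ≤ d) :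
    ∃ G : ℂ → ℝ,
      TendstoLocallyUniformly
        (fun n w => Real.log (max (‖(fun z => g.eval z)^[n] w‖) 1) / d ^ n)
        G atTop ∧
      ∀ w, G (g.eval w) = d * G w := by
  obtain ⟨C, hC0, hC⟩ := green_key g hm d hd hd2
  set L : ℂ → ℝ := fun z => Real.log (max (‖z‖) 1) with hLdef
  set a : ℕ → ℂ → ℝ := fun n w => L ((fun z => g.eval z)^[n] w) / d ^ n with hadef
  have hd0 : (0:ℝ) < d := by
    have : (2:ℝ) ≤ d := by exact_mod_cast hd2
    linarith
  have hd2' : (2:ℝ) ≤ d := by exact_mod_cast hd2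
  have hstep : ∀ n (w : ℂ), dist (a n w) (a (n+1) w) ≤ C * (1/2) ^ n := by
    intro n w
    set x := (fun z => g.eval z)^[n] w with hxdef
    have hiter : (fun z => g.eval z)^[n+1] w = g.eval x :=
      Function.iterate_succ_apply' _ n w
    have key := hC x
    have hdn : (0:ℝ) < (d:ℝ) ^ (n+1) := pow_pos hd0 _
    have e : a n w - a (n+1) w = ((d:ℝ) * L x - L (g.eval x)) / (d:ℝ) ^ (n+1) := by
      simp only [hadef, hiter]
      rw [pow_succ]
      field_simp
      ring
    rw [Real.dist_eq, e, abs_div, abs_of_pos hdn]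
    have habs : |(d:ℝ) * L x - L (g.eval x)| ≤ C := by
      rw [abs_sub_comm]; exact key
    rw [div_le_iff₀ hdn]
    have hpow : (2:ℝ) ^ (n+1) ≤ (d:ℝ) ^ (n+1) :=
      pow_le_pow_left₀ (by norm_num) hd2' _
    have h2 : ((1:ℝ)/2) ^ n * 2 ^ (n+1) = 2 := by
      rw [div_pow, one_pow, pow_succ]
      field_simp
    have hhalf : (0:ℝ) ≤ ((1:ℝ)/2) ^ n := by positivity
    calc |(d:ℝ) * L x - L (g.eval x)| ≤ C := habs
      _ = C * (((1:ℝ)/2) ^ n * 2 ^ (n+1)) / 2 := by rw [h2]; ring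
      _ ≤ C * (((1:ℝ)/2) ^ n * (d:ℝ) ^ (n+1)) / 2 + C * (((1:ℝ)/2) ^ n * (d:ℝ) ^ (n+1)) / 2 := by
          have hle : C * (((1:ℝ)/2) ^ n * 2 ^ (n+1)) ≤ C * (((1:ℝ)/2) ^ n * (d:ℝ) ^ (n+1)) := by
            refine mul_le_mul_of_nonneg_left ?_ hC0
            exact mul_le_mul_of_nonneg_left hpow hhalf
          have h0 : 0 ≤ C * (((1:ℝ)/2) ^ n * (d:ℝ) ^ (n+1)) := by positivity
          linarith
      _ = C * (1/2) ^ n * (d:ℝ) ^ (n+1) := by ring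
  have hcauchy : ∀ w : ℂ, CauchySeq (fun n => a n w) := fun w =>
    cauchySeq_of_le_geometric (1/2) C (by norm_num) (fun n => hstep n w)
  set G : ℂ → ℝ := fun w => limUnder atTop (fun n => a n w) with hGdef
  have hGt : ∀ w, Tendsto (fun n => a n w) atTop (𝓝 (G w)) := fun w =>
    (hcauchy w).tendsto_limUnder
  have hdist : ∀ (n : ℕ) (w : ℂ), dist (a n w) (G w) ≤ C * (1/2) ^ n / (1 - 1/2) :=
    fun n w =>
      dist_le_of_le_geometric_of_tendsto (1/2) C (by norm_num) (fun m => hstep m w) (hGt w) n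
  have hTU : TendstoUniformly a G atTop := by
    rw [Metric.tendstoUniformly_iff]
    intro ε hε
    have htend : Tendsto (fun n : ℕ => C * (1/2) ^ n / (1 - 1/2)) atTop (𝓝 0) := by
      have h0 : Tendsto (fun n : ℕ => ((1:ℝ)/2) ^ n) atTop (𝓝 0) :=
        tendsto_pow_atTop_nhds_zero_of_lt_one (by norm_num) (by norm_num)
      have := (h0.const_mul C).div_const (1 - 1/2)
      simpa using this
    filter_upwards [htend.eventually (gt_mem_nhds hε)] with n hn w
    rw [dist_comm]
    exact lt_of_le_of_lt (hdist n w) hn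
  refine ⟨G, hTU.tendstoLocallyUniformly, ?_⟩
  intro w
  have h1 : Tendsto (fun n => a n (g.eval w)) atTop (𝓝 (G (g.eval w))) := hGt _
  have h2 : Tendsto (fun n => (d:ℝ) * a (n+1) w) atTop (𝓝 ((d:ℝ) * G w)) :=
    ((hGt w).comp (tendsto_add_atTop_nat 1)).const_mul _
  have heq : ∀ n, a n (g.eval w) = (d:ℝ) * a (n+1) w := by
    intro n
    simp only [hadef]
    rw [Function.iterate_succ_apply, pow_succ]
    have hdn : ((d:ℝ)) ^ n ≠ 0 := ne_of_gt (pow_pos hd0 n)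
    have hdne : (d:ℝ) ≠ 0 := ne_of_gt hd0
    field_simp
  exact tendsto_nhds_unique (h1.congr heq) h2
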